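/- Let T_i → T > 0 and let γ_i : [0, T_i] → ℝⁿ be Lipschitz curves with a uniform Lipschitz constant, converging uniformly on [0, min(T_i, T)] to a Lipschitz curve γ : [0,T] → ℝⁿ. Suppose ∫_0^{T_i} dist((γ_i(t), γ_i'(t)), G) dt → 0, where G = {(x,v) : −v ∈ ∂ᶜf(x)} is the graph of −∂ᶜf for a locally Lipschitz f (a closed set, with ∂ᶜf(x) convex for each x). Then −γ'(t) ∈ ∂ᶜf(γ(t)) for almost every t ∈ [0,T]. -/

import Mathlib

open MeasureTheory Filter

/-- The Clarke subdifferential of `f : ℝⁿ → ℝ`: the closed convex hull of all limits of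
gradients of `f` at nearby differentiability points. -/
noncomputable def clarkeSubdiff {n : ℕ} (f : EuclideanSpace ℝ (Fin n) → ℝ)
    (x : EuclideanSpace ℝ (Fin n)) : Set (EuclideanSpace ℝ (Fin n)) :=
  closure (convexHull ℝ
    {v | ∃ y : ℕ → EuclideanSpace ℝ (Fin n),
      (∀ k, DifferentiableAt ℝ f (y k)) ∧
      Tendsto y atTop (nhds x) ∧
      Tendsto (fun k => gradient f (y k)) atTop (nhds v)})

section Aux

variable {n : ℕ}

local notation "E" => EuclideanSpace ℝ (Fin n)

/-- The set of limits of gradients at nearby differentiability points. -/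
def Dset (f : E → ℝ) (x : E) : Set E :=
  {v | ∃ y : ℕ → E,
      (∀ k, DifferentiableAt ℝ f (y k)) ∧
      Tendsto y atTop (nhds x) ∧
      Tendsto (fun k => gradient f (y k)) atTop (nhds v)}

lemma clarke_eq (f : E → ℝ) (x : E) :
    clarkeSubdiff f x = closure (convexHull ℝ (Dset f x)) := rfl

/-- norm of gradient equals norm of fderiv -/
lemma norm_gradient_eq (f : E → ℝ) (x : E) : ‖gradient f x‖ = ‖fderiv ℝ f x‖ := by
  rw [gradient]
  exact LinearIsometryEquiv.norm_map _ _

/-- a derivative of a Lipschitz function has норм at most K -/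
lemma norm_deriv_le_of_lip {F : Type*} [NormedAddCommGroup F] [NormedSpace ℝ F]
    {g : ℝ → F} {K : NNReal} (hg : LipschitzWith K g) {s : ℝ} {v : F}
    (h : HasDerivAt g v s) : ‖v‖ ≤ K := by
  have hslope : Tendsto (slope g s) (nhdsWithin s {s}ᶜ) (nhds v) :=
    hasDerivAt_iff_tendsto_slope.1 h
  have hmem : ∀ y : ℝ, y ≠ s → slope g s y ∈ Metric.closedBall (0 : F) K := by
    intro y hy
    rw [Metric.mem_closedBall, dist_zero_right, slope_def_module, norm_smul,
      norm_inv, Real.norm_eq_abs]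
    have h1 : ‖g y - g s‖ ≤ K * |y - s| := by
      have := hg.dist_le_mul y s
      rwa [dist_eq_norm, Real.dist_eq] at this
    rcases eq_or_ne (y - s) 0 with h0 | h0
    · exact absurd (sub_eq_zero.1 h0) hy
    · rw [inv_mul_le_iff₀ (abs_pos.2 h0)]
      calc ‖g y - g s‖ ≤ K * |y - s| := h1
        _ = |y - s| * K := mul_comm _ _
  have : v ∈ Metric.closedBall (0 : F) K := by
    refine Metric.isClosed_closedBall.mem_of_tendsto hslope ?_
    filter_upwards [self_mem_nhdsWithin] with y hy using hmem y hy
  simpa [Metric.mem_closedBall, dist_zero_right] using this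

/-- elements of Dset are bounded by a local Lipschitz constant on an open set -/
lemma Dset_bound {f : E → ℝ} {L : NNReal} {s : Set E} (hs : IsOpen s)
    {x : E} (hx : x ∈ s) (hL : LipschitzOnWith L f s) :
    ∀ v ∈ Dset f x, ‖v‖ ≤ L := by
  rintro v ⟨y, -, hyx, hgrad⟩
  have hmem : ∀ᶠ k in atTop, y k ∈ s := hyx.eventually (hs.eventually_mem hx)
  have : v ∈ Metric.closedBall (0 : E) L := by
    refine Metric.isClosed_closedBall.mem_of_tendsto hgrad ?_
    filter_upwards [hmem] with k hk
    rw [Metric.mem_closedBall, dist_zero_right, norm_gradient_eq]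
    exact norm_fderiv_le_of_lipschitzOn ℝ (hs.mem_nhds hk) hL
  simpa [Metric.mem_closedBall, dist_zero_right] using this

/-- the graph of Dset is closed -/
lemma Dset_closedGraph {f : E → ℝ} {y : ℕ → E} {x : E} {v : ℕ → E} {w : E}
    (hy : Tendsto y atTop (nhds x)) (hv : ∀ k, v k ∈ Dset f (y k))
    (hw : Tendsto v atTop (nhds w)) : w ∈ Dset f x := by
  have hsel : ∀ k : ℕ, ∃ z : E, DifferentiableAt ℝ f z ∧
      dist z (y k) < 1 / (k + 1) ∧ dist (gradient f z) (v k) < 1 / (k + 1) := by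
    intro k
    obtain ⟨z, hzdiff, hzy, hzg⟩ := hv k
    have hpos : (0 : ℝ) < 1 / (k + 1) := by positivity
    have h1 : ∀ᶠ j in atTop, z j ∈ Metric.ball (y k) (1 / (k + 1)) :=
      hzy (Metric.ball_mem_nhds (y k) hpos)
    have h2 : ∀ᶠ j in atTop, gradient f (z j) ∈ Metric.ball (v k) (1 / (k + 1)) :=
      hzg (Metric.ball_mem_nhds (v k) hpos)
    obtain ⟨j, hj1, hj2⟩ := (h1.and h2).exists
    rw [Metric.mem_ball] at hj1 hj2
    exact ⟨z j, hzdiff j, hj1, hj2⟩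
  choose z hzdiff hzy hzg using hsel
  have hten : Tendsto (fun k : ℕ => 1 / ((k : ℝ) + 1)) atTop (nhds 0) :=
    tendsto_one_div_add_atTop_nhds_zero_nat
  refine ⟨z, hzdiff, ?_, ?_⟩
  · rw [tendsto_iff_dist_tendsto_zero]
    refine squeeze_zero (fun k => dist_nonneg) (fun k =>
      (dist_triangle (z k) (y k) x).trans (add_le_add (hzy k).le le_rfl)) ?_
    simpa using hten.add (tendsto_iff_dist_tendsto_zero.1 hy)
  · rw [tendsto_iff_dist_tendsto_zero]
    refine squeeze_zero (fun k => dist_nonneg) (fun k =>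
      (dist_triangle (gradient f (z k)) (v k) w).trans
        (add_le_add (hzg k).le le_rfl)) ?_
    simpa using hten.add (tendsto_iff_dist_tendsto_zero.1 hw)

/-- uniform bound for Dset on compact sets -/
lemma Dset_compactBound {f : E → ℝ} (hf : LocallyLipschitz f) {C : Set E}
    (hC : IsCompact C) : ∃ L : ℝ, 0 ≤ L ∧ ∀ y ∈ C, ∀ v ∈ Dset f y, ‖v‖ ≤ L := by
  by_contra hcon
  push_neg at hcon
  have hsel : ∀ k : ℕ, ∃ y ∈ C, ∃ v ∈ Dset f y, (k : ℝ) < ‖v‖ := fun k =>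
    hcon k (Nat.cast_nonneg k)
  choose y hyC v hv hnorm using hsel
  obtain ⟨x₀, hx₀C, φ, hφ, hyφ⟩ := hC.tendsto_subseq hyC
  obtain ⟨Kx, t, ht, hK⟩ := hf x₀
  have hsub : LipschitzOnWith Kx f (interior t) := hK.mono interior_subset
  have hmem : ∀ᶠ k in atTop, y (φ k) ∈ interior t :=
    hyφ (isOpen_interior.mem_nhds (mem_interior_iff_mem_nhds.2 ht))
  obtain ⟨k, hk1, hk2⟩ := (hmem.and (eventually_ge_atTop ⌈(Kx : ℝ)⌉₊)).exists
  have hb := Dset_bound isOpen_interior hk1 hsub (v (φ k)) (hv (φ k))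
  have h1 : ((φ k : ℕ) : ℝ) < ‖v (φ k)‖ := hnorm (φ k)
  have h2 : (k : ℝ) ≤ (φ k : ℝ) := by exact_mod_cast hφ.le_apply
  have h3 : (Kx : ℝ) ≤ (k : ℝ) := le_trans (Nat.le_ceil _) (by exact_mod_cast hk2)
  linarith

/-- Dset is nonempty (Rademacher). -/
lemma Dset_nonempty {f : E → ℝ} (hf : LocallyLipschitz f) (x : E) :
    (Dset f x).Nonempty := by
  obtain ⟨Kx, t, ht, hK⟩ := hf x
  obtain ⟨r, hr, hball⟩ := Metric.mem_nhds_iff.1 ht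
  have hlip : LipschitzOnWith Kx f (Metric.ball x r) := hK.mono hball
  obtain ⟨g, hg, hfg⟩ := hlip.extend_real
  have hae : ∀ᵐ y : E, DifferentiableAt ℝ g y := hg.ae_differentiableAt
  have hsel : ∀ k : ℕ, ∃ y, y ∈ Metric.ball x (min r (1 / (k + 1))) ∧
      DifferentiableAt ℝ g y := by
    intro k
    have hpos : (0 : ℝ) < min r (1 / (k + 1)) := lt_min hr (by positivity)
    have h1 : volume (Metric.ball x (min r (1 / (k + 1)))) ≠ 0 :=
      (Metric.measure_ball_pos volume x hpos).ne'
    by_contra hno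
    push_neg at hno
    exact h1 (measure_mono_null (fun z hz => hno z hz) (ae_iff.1 hae))
  choose y hyball hydiff using hsel
  have hyx : Tendsto y atTop (nhds x) := by
    rw [tendsto_iff_dist_tendsto_zero]
    refine squeeze_zero (fun k => dist_nonneg) (fun k =>
      le_trans (Metric.mem_ball.1 (hyball k)).le (min_le_right _ _)) ?_
    exact tendsto_one_div_add_atTop_nhds_zero_nat
  have hyr : ∀ k, y k ∈ Metric.ball x r := fun k =>
    Metric.mem_ball.1 (hyball k) |>.trans_le (min_le_left _ _) |> Metric.mem_ball.2
  have hEq : ∀ k, f =ᶠ[nhds (y k)] g := fun k =>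
    Filter.eventuallyEq_of_mem (Metric.isOpen_ball.mem_nhds (hyr k)) hfg
  have hfd : ∀ k, DifferentiableAt ℝ f (y k) := fun k =>
    (Filter.EventuallyEq.differentiableAt_iff (hEq k)).2 (hydiff k)
  have hgradeq : ∀ k, gradient f (y k) = gradient g (y k) := fun k =>
    (hEq k).gradient_eq
  have hbdd : ∀ k, gradient g (y k) ∈ Metric.closedBall (0 : E) Kx := by
    intro k
    rw [Metric.mem_closedBall, dist_zero_right, norm_gradient_eq]
    exact norm_fderiv_le_of_lipschitz ℝ hg
  obtain ⟨v, hvball, φ, hφ, hgconv⟩ :=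
    (isCompact_closedBall (0 : E) Kx).tendsto_subseq hbdd
  refine ⟨v, y ∘ φ, fun k => hfd (φ k), hyx.comp hφ.tendsto_atTop, ?_⟩
  refine hgconv.congr fun k => ?_
  simp [Function.comp, hgradeq]

lemma Dset_subset_clarke (f : E → ℝ) (x : E) : Dset f x ⊆ clarkeSubdiff f x :=
  fun v hv => subset_closure (subset_convexHull ℝ _ hv)

lemma clarke_nonempty {f : E → ℝ} (hf : LocallyLipschitz f) (x : E) :
    (clarkeSubdiff f x).Nonempty :=
  (Dset_nonempty hf x).mono (Dset_subset_clarke f x)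

lemma clarke_convex (f : E → ℝ) (x : E) : Convex ℝ (clarkeSubdiff f x) :=
  (convex_convexHull ℝ _).closure

lemma clarke_closed (f : E → ℝ) (x : E) : IsClosed (clarkeSubdiff f x) :=
  isClosed_closure

/-- upper semicontinuity of the Clarke subdifferential -/
lemma clarke_usc {f : E → ℝ} (hf : LocallyLipschitz f) (x : E) {ε : ℝ} (hε : 0 < ε) :
    ∃ r > 0, ∀ y ∈ Metric.closedBall x r,
      clarkeSubdiff f y ⊆ Metric.cthickening ε (clarkeSubdiff f x) := by
  have husc : ∃ r > 0, ∀ y ∈ Metric.closedBall x r, ∀ v ∈ Dset f y,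
      ∃ u ∈ Dset f x, dist v u ≤ ε := by
    by_contra hcon
    push_neg at hcon
    have hsel : ∀ k : ℕ, ∃ y ∈ Metric.closedBall x (min 1 (1 / (k + 1))),
        ∃ v ∈ Dset f y, ∀ u ∈ Dset f x, ε < dist v u := by
      intro k
      obtain ⟨y, hy, v, hv, hfar⟩ := hcon (min 1 (1 / (k + 1))) (lt_min one_pos (by positivity))
      exact ⟨y, hy, v, hv, fun u hu => hfar u hu⟩
    choose y hyball v hv hfar using hsel
    have hyx : Tendsto y atTop (nhds x) := by
      rw [tendsto_iff_dist_tendsto_zero]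
      refine squeeze_zero (fun k => dist_nonneg) (fun k =>
        le_trans (Metric.mem_closedBall.1 (hyball k)) (min_le_right _ _)) ?_
      exact tendsto_one_div_add_atTop_nhds_zero_nat
    obtain ⟨L, hL0, hL⟩ := Dset_compactBound hf (isCompact_closedBall x 1)
    have hvball : ∀ k, v k ∈ Metric.closedBall (0 : E) L := by
      intro k
      rw [Metric.mem_closedBall, dist_zero_right]
      exact hL (y k) (Metric.closedBall_subset_closedBall (min_le_left _ _)
        (hyball k)) (v k) (hv k)
    obtain ⟨vlim, hvlimball, φ, hφ, hvconv⟩ :=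
      (isCompact_closedBall (0 : E) L).tendsto_subseq hvball
    have hvlim : vlim ∈ Dset f x :=
      Dset_closedGraph (hyx.comp hφ.tendsto_atTop) (fun k => hv (φ k)) hvconv
    have := hvconv.eventually (Metric.ball_mem_nhds vlim (half_pos hε))
    obtain ⟨k, hk⟩ := this.exists
    have h1 : ε < dist (v (φ k)) vlim := hfar (φ k) vlim hvlim
    have h2 : dist (v (φ k)) vlim < ε / 2 := Metric.mem_ball.1 hk
    linarith
  obtain ⟨r, hr, husc⟩ := husc
  refine ⟨r, hr, fun y hy => ?_⟩
  rw [clarke_eq]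
  refine closure_minimal (convexHull_min (fun v hv => ?_)
    (((clarke_convex f x).cthickening ε))) (Metric.isClosed_cthickening)
  obtain ⟨u, hu, hdist⟩ := husc y hy v hv
  exact Metric.mem_cthickening_of_dist_le v u ε _ (Dset_subset_clarke f x hu) hdist

/-- FTC for Lipschitz curves with a.e. derivative -/
lemma lip_ftc {F : Type*} [NormedAddCommGroup F] [NormedSpace ℝ F] [CompleteSpace F]
    {g : ℝ → F} {K : NNReal} (hg : LipschitzWith K g) {a b : ℝ} (hab : a ≤ b)
    {g' : ℝ → F} (hd : ∀ᵐ s : ℝ, s ∈ Set.Ioo a b → HasDerivAt g (g' s) s) :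
    ∫ s in Set.Ioc a b, g' s = g b - g a := by
  have hgc : Continuous g := hg.continuous
  set μ : Measure ℝ := volume.restrict (Set.Ioc a b) with hμ
  set δ : ℕ → ℝ := fun k => 1 / (k + 1) with hδdef
  have hδpos : ∀ k, 0 < δ k := fun k => by positivity
  have hδ0 : Tendsto δ atTop (nhds 0) := tendsto_one_div_add_atTop_nhds_zero_nat
  set Φ : ℕ → ℝ → F := fun k s => (δ k)⁻¹ • (g (s + δ k) - g s) with hΦdef
  have hΦc : ∀ k, Continuous (Φ k) := fun k =>
    continuous_const.smul ((hgc.comp (continuous_id.add continuous_const)).sub hgc)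
  have hΦm : ∀ k, AEStronglyMeasurable (Φ k) μ := fun k =>
    (hΦc k).aestronglyMeasurable
  have hbound : ∀ k, ∀ᵐ s ∂μ, ‖Φ k s‖ ≤ (K : ℝ) := by
    intro k
    refine Filter.Eventually.of_forall fun s => ?_
    rw [hΦdef]
    simp only
    rw [norm_smul, norm_inv, Real.norm_eq_abs, abs_of_pos (hδpos k)]
    have h1 : ‖g (s + δ k) - g s‖ ≤ K * (δ k) := by
      have := hg.dist_le_mul (s + δ k) s
      rw [dist_eq_norm, Real.dist_eq, add_sub_cancel_left, abs_of_pos (hδpos k)] at this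
      exact this
    rw [inv_mul_le_iff₀ (hδpos k)]
    calc ‖g (s + δ k) - g s‖ ≤ K * δ k := h1
      _ = δ k * (K : ℝ) := mul_comm _ _
  have hμb : μ {b} = 0 := le_antisymm (le_trans (Measure.restrict_le_self _)
    (le_of_eq (Real.volume_singleton))) (zero_le)
  have hlim : ∀ᵐ s ∂μ, Tendsto (fun k => Φ k s) atTop (nhds (g' s)) := by
    have h1 : ∀ᵐ s ∂μ, s ∈ Set.Ioc a b := ae_restrict_mem measurableSet_Ioc
    have h2 : ∀ᵐ s ∂μ, s ∈ Set.Ioo a b → HasDerivAt g (g' s) s := ae_restrict_of_ae hd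
    have h3 : ∀ᵐ s ∂μ, s ≠ b := by
      rw [ae_iff]
      convert hμb using 2
      simp
    filter_upwards [h1, h2, h3] with s hs1 hs2 hs3
    have hio : s ∈ Set.Ioo a b := ⟨hs1.1, lt_of_le_of_ne hs1.2 hs3⟩
    have hder := (hasDerivAt_iff_tendsto_slope_zero.1 (hs2 hio))
    have hδne : Tendsto δ atTop (nhdsWithin 0 {(0:ℝ)}ᶜ) := by
      refine tendsto_nhdsWithin_iff.2 ⟨hδ0, Filter.Eventually.of_forall fun k => ?_⟩
      exact (hδpos k).ne'
    exact hder.comp hδne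
  have hgm : AEStronglyMeasurable g' μ := aestronglyMeasurable_of_tendsto_ae atTop hΦm hlim
  have hboundInt : Integrable (fun _ : ℝ => (K : ℝ)) μ := by
    rw [hμ]
    exact integrableOn_const (by simp [Real.volume_Ioc])
  have hDCT := tendsto_integral_of_dominated_convergence (μ := μ) (F := Φ) (f := g')
    (fun _ => (K : ℝ)) hΦm hboundInt hbound hlim
  -- compute the integrals of Φ k
  have hgint : ∀ c d : ℝ, IntervalIntegrable g volume c d := fun c d =>
    hgc.intervalIntegrable c d
  have hΦint : ∀ k, ∫ s, Φ k s ∂μ =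
      (δ k)⁻¹ • ((∫ s in b..(b + δ k), g s) - ∫ s in a..(a + δ k), g s) := by
    intro k
    have e1 : ∫ s, Φ k s ∂μ = ∫ s in a..b, Φ k s := by
      rw [intervalIntegral.integral_of_le hab]
    have hcont : Continuous fun s => g (s + δ k) :=
      hgc.comp (continuous_id.add continuous_const)
    have hsub : (∫ s in a..b, (g (s + δ k) - g s))
        = (∫ s in a..b, g (s + δ k)) - ∫ s in a..b, g s :=
      intervalIntegral.integral_sub (hcont.intervalIntegrable a b) (hgint a b)
    have e2 : ∫ s in a..b, Φ k s =
        (δ k)⁻¹ • ((∫ s in a..b, g (s + δ k)) - ∫ s in a..b, g s) := by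
      rw [← hsub, ← intervalIntegral.integral_smul]
    have e3 : (∫ s in a..b, g (s + δ k)) = ∫ s in (a + δ k)..(b + δ k), g s :=
      intervalIntegral.integral_comp_add_right g (δ k)
    have h1 : (∫ s in a..(a + δ k), g s) + (∫ s in (a + δ k)..(b + δ k), g s)
        = ∫ s in a..(b + δ k), g s :=
      intervalIntegral.integral_add_adjacent_intervals (hgint _ _) (hgint _ _)
    have h2 : (∫ s in a..b, g s) + (∫ s in b..(b + δ k), g s)
        = ∫ s in a..(b + δ k), g s :=
      intervalIntegral.integral_add_adjacent_intervals (hgint _ _) (hgint _ _)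
    rw [e1, e2, e3]
    congr 1
    have h3 := h1.trans h2.symm
    have h4 : (∫ s in (a + δ k)..(b + δ k), g s) =
        (∫ s in a..(b + δ k), g s) - ∫ s in a..(a + δ k), g s := by
      rw [← h1]; abel
    rw [h4, ← h2]; abel
  -- limits of the boundary averages
  have hbdry : ∀ c : ℝ, Tendsto (fun k => (δ k)⁻¹ • ∫ s in c..(c + δ k), g s)
      atTop (nhds (g c)) := by
    intro c
    rw [← tendsto_sub_nhds_zero_iff]
    refine squeeze_zero_norm (a := fun k => (K : ℝ) * δ k) (fun k => ?_) ?_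
    · have e0 : (δ k)⁻¹ • (∫ s in c..(c + δ k), g s) - g c
          = (δ k)⁻¹ • ∫ s in c..(c + δ k), (g s - g c) := by
        rw [intervalIntegral.integral_sub (hgint _ _)
          (continuous_const.intervalIntegrable _ _), smul_sub,
          intervalIntegral.integral_const, add_sub_cancel_left, smul_smul,
          inv_mul_cancel₀ (hδpos k).ne', one_smul]
      rw [e0, norm_smul, norm_inv, Real.norm_eq_abs, abs_of_pos (hδpos k)]
      have hb2 : ‖∫ s in c..(c + δ k), (g s - g c)‖ ≤ (K * δ k) * |c + δ k - c| := by
        refine intervalIntegral.norm_integral_le_of_norm_le_const fun s hs => ?_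
        have hsmem : s ∈ Set.Ioc c (c + δ k) := by
          rwa [Set.uIoc_of_le (by linarith [hδpos k])] at hs
        have := hg.dist_le_mul s c
        rw [dist_eq_norm, Real.dist_eq] at this
        refine this.trans ?_
        have : |s - c| ≤ δ k := by
          rw [abs_of_nonneg (by linarith [hsmem.1.le])]
          linarith [hsmem.2]
        nlinarith [K.coe_nonneg, hδpos k]
      rw [add_sub_cancel_left, abs_of_pos (hδpos k)] at hb2
      calc (δ k)⁻¹ * ‖∫ s in c..(c + δ k), (g s - g c)‖
          ≤ (δ k)⁻¹ * ((K * δ k) * δ k) := by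
            exact mul_le_mul_of_nonneg_left hb2 (inv_nonneg.2 (hδpos k).le)
        _ = (K : ℝ) * δ k := by field_simp
    · simpa using (tendsto_const_nhds (x := (K : ℝ))).mul hδ0
  have hfinal : Tendsto (fun k => ∫ s, Φ k s ∂μ) atTop (nhds (g b - g a)) := by
    have := ((hbdry b).sub (hbdry a))
    refine Tendsto.congr (fun k => ?_) this
    rw [hΦint k, smul_sub]
  exact tendsto_nhds_unique hDCT hfinal

/-- clamping extension of a Lipschitz-on-[0,c] curve -/
lemma lip_extend {F : Type*} [NormedAddCommGroup F] [NormedSpace ℝ F]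
    {g : ℝ → F} {K : NNReal} {c : ℝ} (hc : 0 ≤ c)
    (hg : LipschitzOnWith K g (Set.Icc 0 c)) :
    LipschitzWith K (fun s => g (max 0 (min s c))) := by
  have hproj : ∀ s : ℝ, max 0 (min s c) ∈ Set.Icc 0 c := fun s =>
    ⟨le_max_left _ _, max_le hc (min_le_right _ _)⟩
  have hlip1 : ∀ x y : ℝ, |max 0 (min x c) - max 0 (min y c)| ≤ |x - y| := by
    intro x y
    calc |max 0 (min x c) - max 0 (min y c)|
        = |max (min x c) 0 - max (min y c) 0| := by rw [max_comm 0, max_comm 0]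
      _ ≤ |min x c - min y c| := abs_max_sub_max_le_abs _ _ _
      _ ≤ max |x - y| |c - c| := abs_min_sub_min_le_max _ _ _ _
      _ = |x - y| := by simp
  refine LipschitzWith.of_dist_le_mul fun x y => ?_
  calc dist (g (max 0 (min x c))) (g (max 0 (min y c)))
      ≤ K * dist (max 0 (min x c)) (max 0 (min y c)) :=
        hg.dist_le_mul _ (hproj x) _ (hproj y)
    _ ≤ K * dist x y := by
        refine mul_le_mul_of_nonneg_left ?_ K.coe_nonneg
        rw [Real.dist_eq, Real.dist_eq]
        exact hlip1 x y

/-- neg flips infEdist over the reflected set -/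
lemma infEdist_negset {x : E} {S : Set E} :
    EMetric.infEdist x {v : E | -v ∈ S} = EMetric.infEdist (-x) S := by
  apply le_antisymm
  · refine le_iInf₂ fun u hu => ?_
    have h1 : -u ∈ {v : E | -v ∈ S} := by simp [hu]
    calc EMetric.infEdist x {v : E | -v ∈ S} ≤ edist x (-u) :=
          EMetric.infEdist_le_edist_of_mem h1
      _ = edist (-x) u := by rw [← edist_neg_neg, neg_neg]
  · refine le_iInf₂ fun u hu => ?_
    calc EMetric.infEdist (-x) S ≤ edist (-x) (-u) :=
          EMetric.infEdist_le_edist_of_mem hu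
      _ = edist x u := edist_neg_neg _ _

set_option maxHeartbeats 2000000 in
/-- the core pointwise lemma -/
lemma aux_core {f : E → ℝ}
    (hf : LocallyLipschitz f)
    {T : ℝ} (hT : 0 < T) {Ti : ℕ → ℝ} (hTi : ∀ i, 0 < Ti i)
    (hTconv : Tendsto Ti atTop (nhds T))
    {K : NNReal}
    {γi : ℕ → ℝ → E}
    (hγi : ∀ i, LipschitzOnWith K (γi i) (Set.Icc 0 (Ti i)))
    {γ : ℝ → E} (hγ : LipschitzOnWith K γ (Set.Icc 0 T))
    (hconv : Tendsto (fun i => ⨆ t : Set.Icc 0 (min (Ti i) T), ‖γ t - γi i t‖)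
      atTop (nhds 0))
    {γi' : ℕ → ℝ → E}
    (hγi' : ∀ i, ∀ᵐ t : ℝ, t ∈ Set.Icc 0 (Ti i) → HasDerivAt (γi i) (γi' i t) t)
    (hdist : Tendsto (fun i => ∫ t in (0:ℝ)..(Ti i),
        Metric.infDist (γi i t, γi' i t)
          {p : E × E | -p.2 ∈ clarkeSubdiff f p.1}) atTop (nhds 0))
    {t : ℝ} (ht : t ∈ Set.Ioo 0 T) {d : E} (hd : HasDerivAt γ d t) :
    -d ∈ clarkeSubdiff f (γ t) := by
  set G := {p : E × E | -p.2 ∈ clarkeSubdiff f p.1} with hGdef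
  have hGne : G.Nonempty := by
    obtain ⟨u, hu⟩ := clarke_nonempty hf (0 : E)
    exact ⟨((0 : E), -u), by simp [hGdef, hu]⟩
  set x₀ := γ t with hx₀
  set Vgen : ℝ → Set E :=
    fun ρ => {v | ∃ y ∈ Metric.closedBall x₀ ρ, -v ∈ clarkeSubdiff f y} with hVgen
  set V : ℝ → Set E := fun ρ => convexHull ℝ (Vgen ρ) with hV
  have hVne : ∀ ρ : ℝ, 0 ≤ ρ → (V ρ).Nonempty := by
    intro ρ hρ
    obtain ⟨u, hu⟩ := clarke_nonempty hf x₀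
    exact ⟨-u, subset_convexHull ℝ _ ⟨x₀, Metric.mem_closedBall_self hρ, by simpa using hu⟩⟩
  -- the extensions of the γi and their derivatives
  set g : ℕ → ℝ → E := fun i s => γi i (max 0 (min s (Ti i))) with hgdef
  have hglip : ∀ i, LipschitzWith K (g i) := fun i => lip_extend (hTi i).le (hγi i)
  have hgeq : ∀ i, ∀ s ∈ Set.Icc 0 (Ti i), g i s = γi i s := by
    intro i s hs
    rw [hgdef]
    simp only
    rw [min_eq_left hs.2, max_eq_right hs.1]
  set Dg : ℕ → ℝ → E := fun i => deriv (g i) with hDgdef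
  have hDgB : ∀ i s, ‖Dg i s‖ ≤ K := by
    intro i s
    by_cases hdiff : DifferentiableAt ℝ (g i) s
    · exact norm_deriv_le_of_lip (hglip i) hdiff.hasDerivAt
    · rw [hDgdef]; simp only [deriv_zero_of_not_differentiableAt hdiff, norm_zero]
      exact K.coe_nonneg
  have hae : ∀ i, ∀ᵐ s : ℝ, s ∈ Set.Ioo 0 (Ti i) →
      HasDerivAt (g i) (Dg i s) s ∧ Dg i s = γi' i s := by
    intro i
    filter_upwards [hγi' i] with s hs hsIoo
    have h1 : HasDerivAt (γi i) (γi' i s) s := hs (Set.Ioo_subset_Icc_self hsIoo)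
    have heq : g i =ᶠ[nhds s] γi i :=
      Filter.eventually_of_mem (isOpen_Ioo.mem_nhds hsIoo)
        (fun z hz => hgeq i z (Set.Ioo_subset_Icc_self hz))
    have h2 : HasDerivAt (g i) (γi' i s) s := h1.congr_of_eventuallyEq heq
    have h3 : Dg i s = γi' i s := h2.deriv
    exact ⟨h3 ▸ h2, h3⟩
  -- a measurable integrand
  set e : ℕ → ℝ → ℝ := fun i s => Metric.infDist ((g i s, Dg i s)) G with hedef
  have hgc : ∀ i, Continuous (g i) := fun i => (hglip i).continuous
  have hem : ∀ i, Measurable (e i) := by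
    intro i
    have h1 : Measurable fun s => ((g i s, Dg i s) : E × E) :=
      ((hgc i).measurable).prodMk (measurable_deriv _)
    exact (Metric.continuous_infDist_pt G).measurable.comp h1
  have hen : ∀ i s, 0 ≤ e i s := fun i s => Metric.infDist_nonneg
  have heint : ∀ i, IntegrableOn (e i) (Set.Ioc 0 (Ti i)) volume := by
    intro i
    obtain ⟨p₀, hp₀⟩ := hGne
    set C := max (K * Ti i + (‖g i 0‖ + ‖p₀.1‖)) (K + ‖p₀.2‖) with hC
    refine Integrable.mono' (g := fun _ => C)
      (integrableOn_const (by simp [Real.volume_Ioc]))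
      ((hem i).aestronglyMeasurable) ?_
    filter_upwards [ae_restrict_mem measurableSet_Ioc] with s hs
    rw [Real.norm_eq_abs, abs_of_nonneg (hen i s)]
    refine (Metric.infDist_le_dist_of_mem hp₀).trans ?_
    rw [Prod.dist_eq]
    refine max_le (le_trans ?_ (le_max_left _ _)) (le_trans ?_ (le_max_right _ _))
    · calc dist (g i s) p₀.1 ≤ dist (g i s) (g i 0) + dist (g i 0) p₀.1 :=
            dist_triangle _ _ _
        _ ≤ K * dist s 0 + (‖g i 0‖ + ‖p₀.1‖) := by
            refine add_le_add ((hglip i).dist_le_mul s 0) (dist_le_norm_add_norm _ _)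
        _ ≤ K * Ti i + (‖g i 0‖ + ‖p₀.1‖) := by
            refine add_le_add_left (mul_le_mul_of_nonneg_left ?_ K.coe_nonneg) _
            rw [Real.dist_eq, sub_zero, abs_of_pos hs.1]
            exact hs.2
    · calc dist (Dg i s) p₀.2 ≤ ‖Dg i s‖ + ‖p₀.2‖ := dist_le_norm_add_norm _ _
        _ ≤ K + ‖p₀.2‖ := add_le_add_left (hDgB i s) _
  have hδtot : Tendsto (fun i => ∫ s in Set.Ioc 0 (Ti i), e i s) atTop (nhds 0) := by
    refine hdist.congr fun i => ?_
    rw [intervalIntegral.integral_of_le (hTi i).le]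
    refine setIntegral_congr_ae measurableSet_Ioc ?_
    have hne : ∀ᵐ s : ℝ, s ≠ Ti i := by
      rw [ae_iff]
      have : {s : ℝ | ¬s ≠ Ti i} = {Ti i} := by ext s; simp
      rw [this]
      exact Real.volume_singleton
    filter_upwards [hae i, hne] with s hs hsne hsIoc
    have hIoo : s ∈ Set.Ioo 0 (Ti i) := ⟨hsIoc.1, lt_of_le_of_ne hsIoc.2 hsne⟩
    obtain ⟨h1, h2⟩ := hs hIoo
    rw [hedef]
    simp only
    rw [hgeq i s (Set.Ioo_subset_Icc_self hIoo), h2]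
  -- key step: d belongs to the closure of V ρ for every ρ > 0
  have key : ∀ ρ : ℝ, 0 < ρ → d ∈ closure (V ρ) := by
    intro ρ hρ
    have hKpos : (0 : ℝ) < (K : ℝ) + 1 := by positivity
    set h₀ : ℝ := min ((T - t) / 2) (ρ / (4 * ((K : ℝ) + 1))) with hh₀def
    have hh₀pos : 0 < h₀ := lt_min (by linarith [ht.2]) (by positivity)
    have hq : ∀ h : ℝ, 0 < h → h ≤ h₀ → h⁻¹ • (γ (t + h) - γ t) ∈ closure (V ρ) := by
      intro h hh hhle
      have hth : t + h < T := by
        have : h ≤ (T - t) / 2 := hhle.trans (min_le_left _ _)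
        linarith [ht.2]
      have hKh : ((K : ℝ) + 1) * h ≤ ρ / 4 := by
        have h1 : h ≤ ρ / (4 * ((K : ℝ) + 1)) := hhle.trans (min_le_right _ _)
        calc ((K : ℝ) + 1) * h ≤ ((K : ℝ) + 1) * (ρ / (4 * ((K : ℝ) + 1))) := by nlinarith
          _ = ρ / 4 := by field_simp
      set q : E := h⁻¹ • (γ (t + h) - γ t) with hqdef
      have hmain : ∀ σ : ℝ, 0 < σ → σ ≤ ρ / 4 → σ ≤ 1 / 2 →
          Metric.infDist q (V ρ) ≤ 5 * σ := by
        intro σ hσ hσρ hσhalf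
        -- choose i
        have hc1 : ∀ᶠ i in atTop,
            (⨆ s : Set.Icc 0 (min (Ti i) T), ‖γ s - γi i s‖) < σ * h :=
          hconv.eventually_lt_const (by positivity)
        have hc2 : ∀ᶠ i in atTop,
            (∫ s in Set.Ioc 0 (Ti i), e i s) < σ ^ 2 * h / ((K : ℝ) + 1) :=
          hδtot.eventually_lt_const (by positivity)
        have hc3 : ∀ᶠ i in atTop, t + h < Ti i := hTconv.eventually_const_lt hth
        obtain ⟨i, hi1, hi2, hi3⟩ := (hc1.and (hc2.and hc3)).exists
        obtain ⟨hi2, hi3⟩ := And.intro hi2 hi3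
        have ht0 : 0 < t := ht.1
        -- uniform bound from the sup
        have hsupB : ∀ s ∈ Set.Icc 0 (min (Ti i) T), ‖γ s - γi i s‖ < σ * h := by
          intro s hs
          have hbdd : BddAbove (Set.range
              fun z : Set.Icc 0 (min (Ti i) T) => ‖γ z - γi i z‖) := by
            refine ⟨(K : ℝ) * T + (‖γ 0 - γi i 0‖ + (K : ℝ) * Ti i), ?_⟩
            rintro _ ⟨z, rfl⟩
            have hz := z.2
            have hzT : (z : ℝ) ∈ Set.Icc 0 T := ⟨hz.1, hz.2.trans (min_le_right _ _)⟩
            have hzTi : (z : ℝ) ∈ Set.Icc 0 (Ti i) := ⟨hz.1, hz.2.trans (min_le_left _ _)⟩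
            have h0T : (0 : ℝ) ∈ Set.Icc 0 T := ⟨le_rfl, hT.le⟩
            have h0Ti : (0 : ℝ) ∈ Set.Icc 0 (Ti i) := ⟨le_rfl, (hTi i).le⟩
            calc ‖γ z - γi i z‖ = dist (γ z) (γi i z) := (dist_eq_norm _ _).symm
              _ ≤ dist (γ z) (γ 0) + dist (γ 0) (γi i 0) + dist (γi i 0) (γi i z) :=
                  dist_triangle4 _ _ _ _
              _ ≤ (K : ℝ) * T + (‖γ 0 - γi i 0‖ + (K : ℝ) * Ti i) := by
                  have e1 : dist (γ z) (γ 0) ≤ (K : ℝ) * T := by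
                    refine (hγ.dist_le_mul _ hzT _ h0T).trans ?_
                    refine mul_le_mul_of_nonneg_left ?_ K.coe_nonneg
                    rw [Real.dist_eq, sub_zero, abs_of_nonneg hz.1]
                    exact hzT.2
                  have e2 : dist (γi i 0) (γi i z) ≤ (K : ℝ) * Ti i := by
                    refine ((hγi i).dist_le_mul _ h0Ti _ hzTi).trans ?_
                    refine mul_le_mul_of_nonneg_left ?_ K.coe_nonneg
                    rw [Real.dist_eq, abs_sub_comm, sub_zero, abs_of_nonneg hz.1]
                    exact hzTi.2
                  have e3 : dist (γ 0) (γi i 0) = ‖γ 0 - γi i 0‖ := dist_eq_norm _ _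
                  linarith
          exact lt_of_le_of_lt (le_ciSup hbdd (⟨s, hs⟩ : Set.Icc 0 (min (Ti i) T))) hi1
        -- FTC
        have htTi : t + h < Ti i := hi3
        have hIoosub : Set.Ioo t (t + h) ⊆ Set.Ioo 0 (Ti i) := fun z hz =>
          ⟨ht0.trans hz.1, hz.2.trans htTi⟩
        have hFTC : ∫ s in Set.Ioc t (t + h), Dg i s = γi i (t + h) - γi i t := by
          have hd' : ∀ᵐ s : ℝ, s ∈ Set.Ioo t (t + h) → HasDerivAt (g i) (Dg i s) s := by
            filter_upwards [hae i] with z hz hzI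
            exact (hz (hIoosub hzI)).1
          have hres := lip_ftc (hglip i) (by linarith : t ≤ t + h) hd'
          rw [hres, hgeq i (t + h) ⟨by linarith, htTi.le⟩,
            hgeq i t ⟨ht0.le, by linarith⟩]
        -- the bad set
        set Bad := Set.Ioc t (t + h) ∩ {z | σ ≤ e i z} with hBadDef
        have hsetm : MeasurableSet {z : ℝ | σ ≤ e i z} :=
          measurableSet_le measurable_const (hem i)
        have hBadm : MeasurableSet Bad := measurableSet_Ioc.inter hsetm
        set A := Set.Ioc t (t + h) \ Bad with hADef
        have hAm : MeasurableSet A := measurableSet_Ioc.diff hBadm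
        have hAsub : A ⊆ Set.Ioc t (t + h) := Set.diff_subset
        have hAe : ∀ z ∈ A, e i z < σ := fun z hz =>
          lt_of_not_ge fun hc => hz.2 ⟨hz.1, hc⟩
        have hIocT : Set.Ioc t (t + h) ⊆ Set.Ioc 0 (Ti i) := fun z hz =>
          ⟨ht0.trans hz.1, hz.2.trans htTi.le⟩
        have hvolIoc : volume (Set.Ioc t (t + h)) = ENNReal.ofReal h := by
          rw [Real.volume_Ioc, add_sub_cancel_left]
        have hvolIocR : (volume (Set.Ioc t (t + h))).toReal = h := by
          rw [hvolIoc, ENNReal.toReal_ofReal hh.le]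
        have hvolIocTop : volume (Set.Ioc t (t + h)) ≠ ⊤ := by
          rw [hvolIoc]; exact ENNReal.ofReal_ne_top
        -- Chebyshev
        have heintS : IntegrableOn (e i) (Set.Ioc t (t + h)) volume :=
          (heint i).mono_set hIocT
        have hcheb := mul_meas_ge_le_integral_of_nonneg
          (μ := volume.restrict (Set.Ioc t (t + h)))
          (Filter.Eventually.of_forall fun z => hen i z) heintS σ
        have hrestr : (volume.restrict (Set.Ioc t (t + h))) {z | σ ≤ e i z}
            = volume Bad := by
          rw [Measure.restrict_apply hsetm, Set.inter_comm]
        have hintmono : ∫ z in Set.Ioc t (t + h), e i z ≤ ∫ z in Set.Ioc 0 (Ti i), e i z := by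
          refine setIntegral_mono_set (heint i)
            (Filter.Eventually.of_forall fun z => hen i z)
            (HasSubset.Subset.eventuallyLE hIocT)
        have hBadR : (volume Bad).toReal ≤ σ * h / ((K : ℝ) + 1) := by
          rw [measureReal_def, hrestr] at hcheb
          have h2 : σ * (volume Bad).toReal ≤ σ ^ 2 * h / ((K : ℝ) + 1) :=
            hcheb.trans (hintmono.trans hi2.le)
          have h3 : σ ^ 2 * h / ((K : ℝ) + 1) = σ * (σ * h / ((K : ℝ) + 1)) := by
            field_simp
          rw [h3] at h2
          exact le_of_mul_le_mul_left h2 hσ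
        have hBadTop : volume Bad ≠ ⊤ :=
          ne_top_of_le_ne_top hvolIocTop (measure_mono Set.inter_subset_left)
        have hBadle : volume Bad ≤ volume (Set.Ioc t (t + h)) :=
          measure_mono Set.inter_subset_left
        have hvolA : (volume A).toReal = h - (volume Bad).toReal := by
          rw [hADef, measure_diff Set.inter_subset_left hBadm.nullMeasurableSet hBadTop,
            ENNReal.toReal_sub_of_le hBadle hvolIocTop, hvolIocR]
        have hBadhalf : (volume Bad).toReal ≤ h / 2 := by
          refine hBadR.trans ?_
          rw [div_le_iff₀ hKpos]
          nlinarith [K.coe_nonneg]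
        have hApos : 0 < (volume A).toReal := by rw [hvolA]; linarith
        have hAne : volume A ≠ 0 := by
          intro hc; rw [hc] at hApos; simp at hApos
        have hATop : volume A ≠ ⊤ :=
          ne_top_of_le_ne_top hvolIocTop (measure_mono hAsub)
        -- integrability of Dg
        have hDgInt : IntegrableOn (Dg i) (Set.Ioc t (t + h)) volume := by
          refine Integrable.mono' (g := fun _ => (K : ℝ))
            (integrableOn_const (by rw [hvolIoc]; exact ENNReal.ofReal_ne_top))
            ((measurable_deriv _).aestronglyMeasurable)
            (Filter.Eventually.of_forall fun z => hDgB i z)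
        have hsplit : (∫ z in Set.Ioc t (t + h) ∩ Bad, Dg i z)
            + (∫ z in A, Dg i z) = ∫ z in Set.Ioc t (t + h), Dg i z :=
          integral_inter_add_diff hBadm hDgInt
        have hinterBad : Set.Ioc t (t + h) ∩ Bad = Bad :=
          Set.inter_eq_self_of_subset_right Set.inter_subset_left
        rw [hinterBad] at hsplit
        -- the convex region for the averages
        set W := Metric.cthickening σ (V ρ) ∩ Metric.closedBall (0 : E) K with hWdef
        have hWconv : Convex ℝ W :=
          ((convex_convexHull ℝ _).cthickening σ).inter (convex_closedBall _ _)
        have hWclosed : IsClosed W :=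
          Metric.isClosed_cthickening.inter Metric.isClosed_closedBall
        have hmemA : ∀ z ∈ A, Dg i z ∈ W := by
          intro z hz
          have hzIoc : z ∈ Set.Ioc t (t + h) := hAsub hz
          refine ⟨?_, by rw [Metric.mem_closedBall, dist_zero_right]; exact hDgB i z⟩
          have hlt : Metric.infDist ((g i z, Dg i z)) G < σ := hAe z hz
          obtain ⟨p, hpG, hpd⟩ := (Metric.infDist_lt_iff hGne).1 hlt
          rw [Prod.dist_eq] at hpd
          have hpd1 : dist (g i z) p.1 < σ := (le_max_left _ _).trans_lt hpd
          have hpd2 : dist (Dg i z) p.2 < σ := (le_max_right _ _).trans_lt hpd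
          have hzIcc : z ∈ Set.Icc 0 (Ti i) := Set.Ioc_subset_Icc_self (hIocT hzIoc)
          have hzmin : z ∈ Set.Icc 0 (min (Ti i) T) :=
            ⟨(ht0.trans hzIoc.1).le, le_min (hzIoc.2.trans htTi.le) (hzIoc.2.trans hth.le)⟩
          have hzT : z ∈ Set.Icc 0 T := ⟨(ht0.trans hzIoc.1).le, hzIoc.2.trans hth.le⟩
          have hb1 : dist (g i z) (γ z) < σ * h := by
            rw [hgeq i z hzIcc, dist_comm, dist_eq_norm]
            exact hsupB z hzmin
          have hb2 : dist (γ z) x₀ ≤ (K : ℝ) * h := by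
            rw [hx₀]
            refine (hγ.dist_le_mul _ hzT _ ⟨ht0.le, ht.2.le⟩).trans ?_
            refine mul_le_mul_of_nonneg_left ?_ K.coe_nonneg
            rw [Real.dist_eq, abs_of_pos (by linarith [hzIoc.1] : (0:ℝ) < z - t)]
            linarith [hzIoc.2]
          have hp1 : p.1 ∈ Metric.closedBall x₀ ρ := by
            rw [Metric.mem_closedBall]
            have hd4 : dist p.1 x₀ ≤ dist p.1 (g i z) + dist (g i z) (γ z)
                + dist (γ z) x₀ := dist_triangle4 _ _ _ _
            rw [dist_comm p.1 (g i z)] at hd4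
            have hσh : σ * h ≤ h := by nlinarith
            have : dist p.1 x₀ ≤ σ + σ * h + (K : ℝ) * h := by
              refine hd4.trans ?_
              exact add_le_add (add_le_add hpd1.le hb1.le) hb2
            nlinarith [hKh]
          have hgen : p.2 ∈ Vgen ρ := ⟨p.1, hp1, hpG⟩
          exact Metric.mem_cthickening_of_dist_le (Dg i z) p.2 σ _
            (subset_convexHull ℝ _ hgen) hpd2.le
        -- the average
        set w := ⨍ z in A, Dg i z with hwdef
        have hwW : w ∈ W := hWconv.set_average_mem hWclosed hAne hATop
          ((ae_restrict_mem hAm).mono fun z hz => hmemA z hz) (hDgInt.mono_set hAsub)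
        have hintA : ∫ z in A, Dg i z = (volume A).toReal • w := by
          rw [hwdef, setAverage_eq, smul_smul, measureReal_def, mul_inv_cancel₀ hApos.ne', one_smul]
        -- assembling the estimate
        set qi : E := h⁻¹ • (γi i (t + h) - γi i t) with hqidef
        have hqqi : dist q qi ≤ 2 * σ := by
          rw [hqdef, hqidef, dist_eq_norm, ← smul_sub, norm_smul, norm_inv,
            Real.norm_eq_abs, abs_of_pos hh]
          have hsplit2 : γ (t + h) - γ t - (γi i (t + h) - γi i t)
              = (γ (t + h) - γi i (t + h)) - (γ t - γi i t) := by abel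
          have h1 : ‖γ (t + h) - γi i (t + h)‖ < σ * h :=
            hsupB (t + h) ⟨by linarith, le_min htTi.le hth.le⟩
          have h2 : ‖γ t - γi i t‖ < σ * h :=
            hsupB t ⟨ht0.le, le_min (by linarith) ht.2.le⟩
          have h3 : ‖γ (t + h) - γ t - (γi i (t + h) - γi i t)‖ ≤ σ * h + σ * h := by
            rw [hsplit2]
            exact (norm_sub_le _ _).trans (by linarith)
          calc h⁻¹ * ‖γ (t + h) - γ t - (γi i (t + h) - γi i t)‖
              ≤ h⁻¹ * (σ * h + σ * h) :=
                mul_le_mul_of_nonneg_left h3 (inv_nonneg.2 hh.le)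
            _ = 2 * σ := by field_simp; ring
        have hwnorm : ‖w‖ ≤ (K : ℝ) := by
          have := hwW.2
          rwa [Metric.mem_closedBall, dist_zero_right] at this
        have hbadnorm : ‖∫ z in Bad, Dg i z‖ ≤ (K : ℝ) * (volume Bad).toReal :=
          norm_setIntegral_le_of_norm_le_const (lt_of_le_of_lt hBadle
              (lt_of_le_of_ne le_top hvolIocTop))
            (fun z _ => hDgB i z)
        have hqiw : dist qi w ≤ 2 * σ := by
          have hqi2 : qi = h⁻¹ • ((∫ z in Bad, Dg i z) + (volume A).toReal • w) := by
            rw [hqidef, ← hFTC, ← hsplit, hintA]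
          rw [dist_eq_norm, hqi2]
          have hexp : h⁻¹ • ((∫ z in Bad, Dg i z) + (volume A).toReal • w) - w
              = h⁻¹ • (∫ z in Bad, Dg i z) + (h⁻¹ * (volume A).toReal - 1) • w := by
            rw [smul_add, smul_smul, sub_smul, one_smul]
            abel
          rw [hexp]
          have habs : |h⁻¹ * (volume A).toReal - 1| = (volume Bad).toReal / h := by
            have hval : h⁻¹ * (volume A).toReal - 1 = -((volume Bad).toReal / h) := by
              rw [hvolA]; field_simp; ring
            rw [hval, abs_neg, abs_of_nonneg (by positivity)]
          have hterm1 : ‖h⁻¹ • (∫ z in Bad, Dg i z)‖ ≤ (K : ℝ) * (volume Bad).toReal / h := by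
            rw [norm_smul, norm_inv, Real.norm_eq_abs, abs_of_pos hh]
            rw [inv_mul_le_iff₀ hh]
            refine hbadnorm.trans (le_of_eq ?_)
            field_simp
          have hterm2 : ‖(h⁻¹ * (volume A).toReal - 1) • w‖
              ≤ (volume Bad).toReal / h * (K : ℝ) := by
            rw [norm_smul, Real.norm_eq_abs, habs]
            exact mul_le_mul_of_nonneg_left hwnorm (by positivity)
          have hbh : (volume Bad).toReal / h ≤ σ / ((K : ℝ) + 1) := by
            rw [div_le_div_iff₀ hh hKpos]
            calc (volume Bad).toReal * ((K : ℝ) + 1)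
                ≤ (σ * h / ((K : ℝ) + 1)) * ((K : ℝ) + 1) := by
                  exact mul_le_mul_of_nonneg_right hBadR (by positivity)
              _ = σ * h := by field_simp
          calc ‖h⁻¹ • (∫ z in Bad, Dg i z) + (h⁻¹ * (volume A).toReal - 1) • w‖
              ≤ (K : ℝ) * (volume Bad).toReal / h + (volume Bad).toReal / h * (K : ℝ) := by
                exact (norm_add_le _ _).trans (add_le_add hterm1 hterm2)
            _ ≤ 2 * σ := by
                have hb2 : (K : ℝ) * (volume Bad).toReal / h
                    = (K : ℝ) * ((volume Bad).toReal / h) := by ring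
                have h5 : (K : ℝ) * ((volume Bad).toReal / h) ≤ σ := by
                  calc (K : ℝ) * ((volume Bad).toReal / h)
                      ≤ (K : ℝ) * (σ / ((K : ℝ) + 1)) :=
                        mul_le_mul_of_nonneg_left hbh K.coe_nonneg
                    _ ≤ σ := by
                        rw [← mul_div_assoc, div_le_iff₀ hKpos]
                        nlinarith [K.coe_nonneg]
                rw [hb2, mul_comm ((volume Bad).toReal / h) (K:ℝ)]
                linarith
        have hwV : Metric.infDist w (V ρ) ≤ σ := by
          have h1 := hwW.1
          rw [Metric.mem_cthickening_iff] at h1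
          have h2 : Metric.infDist w (V ρ) = (EMetric.infEdist w (V ρ)).toReal := rfl
          rw [h2]
          calc (EMetric.infEdist w (V ρ)).toReal ≤ (ENNReal.ofReal σ).toReal :=
              ENNReal.toReal_mono ENNReal.ofReal_ne_top h1
            _ = σ := ENNReal.toReal_ofReal hσ.le
        calc Metric.infDist q (V ρ) ≤ Metric.infDist w (V ρ) + dist q w :=
            Metric.infDist_le_infDist_add_dist
          _ ≤ σ + (dist q qi + dist qi w) :=
              add_le_add hwV (dist_triangle _ _ _)
          _ ≤ σ + (2 * σ + 2 * σ) := by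
              refine add_le_add_right (add_le_add hqqi hqiw) σ
          _ = 5 * σ := by ring
      have hinf0 : Metric.infDist q (V ρ) = 0 := by
        by_contra hne
        have hpos : 0 < Metric.infDist q (V ρ) :=
          lt_of_le_of_ne Metric.infDist_nonneg (Ne.symm hne)
        set σ : ℝ := min (min (ρ / 4) (1 / 2)) (Metric.infDist q (V ρ) / 6) with hσdef
        have hσpos : 0 < σ := lt_min (lt_min (by positivity) one_half_pos) (by positivity)
        have h5 := hmain σ hσpos ((min_le_left _ _).trans (min_le_left _ _))
          ((min_le_left _ _).trans (min_le_right _ _))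
        have hσle : σ ≤ Metric.infDist q (V ρ) / 6 := min_le_right _ _
        nlinarith
      exact (Metric.mem_closure_iff_infDist_zero (hVne ρ hρ.le)).2 hinf0
    have htend : Tendsto (fun h : ℝ => h⁻¹ • (γ (t + h) - γ t))
        (nhdsWithin 0 (Set.Ioi 0)) (nhds d) :=
      (hasDerivAt_iff_tendsto_slope_zero.1 hd).mono_left
        (nhdsWithin_mono 0 (fun x hx => Set.mem_compl_singleton_iff.2 (ne_of_gt hx)))
    exact isClosed_closure.mem_of_tendsto htend
      (Filter.eventually_of_mem (Ioc_mem_nhdsGT hh₀pos)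
        (fun h hh => hq h hh.1 hh.2))
  -- conclusion via upper semicontinuity
  have hS₀ : (clarkeSubdiff f x₀).Nonempty := clarke_nonempty hf x₀
  have hfinal : ∀ ε : ℝ, 0 < ε →
      d ∈ Metric.cthickening ε {v : E | -v ∈ clarkeSubdiff f x₀} := by
    intro ε hε
    obtain ⟨r, hr, husc⟩ := clarke_usc hf x₀ (hε := hε)
    have hsub : V r ⊆ Metric.cthickening ε {v : E | -v ∈ clarkeSubdiff f x₀} := by
      have hconv2 : Convex ℝ (Metric.cthickening ε {v : E | -v ∈ clarkeSubdiff f x₀}) := by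
        have hneg : {v : E | -v ∈ clarkeSubdiff f x₀} = -(clarkeSubdiff f x₀) :=
          Set.ext fun v => (Set.mem_neg).symm
        rw [hneg]
        exact ((clarke_convex f x₀).neg).cthickening ε
      refine convexHull_min (fun v hv => ?_) hconv2
      obtain ⟨y, hy, hvy⟩ := hv
      have h1 : -v ∈ Metric.cthickening ε (clarkeSubdiff f x₀) := husc y hy hvy
      rw [Metric.mem_cthickening_iff] at h1 ⊢
      exact (infEdist_negset (x := v) (S := clarkeSubdiff f x₀)).le.trans h1
    have : d ∈ closure (Metric.cthickening ε {v : E | -v ∈ clarkeSubdiff f x₀}) :=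
      closure_mono hsub (by simpa [hV] using key r hr)
    rwa [Metric.isClosed_cthickening.closure_eq] at this
  have hdmem : d ∈ {v : E | -v ∈ clarkeSubdiff f x₀} := by
    have hclosed : IsClosed {v : E | -v ∈ clarkeSubdiff f x₀} :=
      (clarke_closed f x₀).preimage continuous_neg
    have hne : ({v : E | -v ∈ clarkeSubdiff f x₀}).Nonempty := by
      obtain ⟨u, hu⟩ := hS₀
      exact ⟨-u, by simpa using hu⟩
    have : d ∈ closure {v : E | -v ∈ clarkeSubdiff f x₀} := by
      rw [Metric.closure_eq_iInter_cthickening]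
      exact Set.mem_iInter₂.2 fun ε hε => hfinal ε hε
    rwa [hclosed.closure_eq] at this
  exact hdmem

end Aux

/-- (Lemma 5.1.) Let `T_i → T > 0`, and let `γ_i : [0,T_i] → ℝⁿ` be
Lipschitz curves with a uniform Lipschitz constant converging uniformly on
`[0, min(T_i,T)]` to a Lipschitz curve `γ`. If
`∫_0^{T_i} dist((γ_i(t), γ_i′(t)), G) dt → 0` where `G = graph(−∂ᶜf)` for a locally
Lipschitz `f`, then `−γ′(t) ∈ ∂ᶜf(γ(t))` for a.e. `t ∈ [0,T]`. -/
theorem stmt16 {n : ℕ} (f : EuclideanSpace ℝ (Fin n) → ℝ)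
    (hf : LocallyLipschitz f)
    (T : ℝ) (hT : 0 < T) (Ti : ℕ → ℝ) (hTi : ∀ i, 0 < Ti i)
    (hTconv : Tendsto Ti atTop (nhds T))
    (K : NNReal)
    (γi : ℕ → ℝ → EuclideanSpace ℝ (Fin n))
    (hγi : ∀ i, LipschitzOnWith K (γi i) (Set.Icc 0 (Ti i)))
    (γ : ℝ → EuclideanSpace ℝ (Fin n)) (hγ : LipschitzOnWith K γ (Set.Icc 0 T))
    (hconv : Tendsto (fun i => ⨆ t : Set.Icc 0 (min (Ti i) T), ‖γ t - γi i t‖)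
      atTop (nhds 0))
    (γi' : ℕ → ℝ → EuclideanSpace ℝ (Fin n))
    (hγi' : ∀ i, ∀ᵐ t : ℝ, t ∈ Set.Icc 0 (Ti i) → HasDerivAt (γi i) (γi' i t) t)
    (hdist : Tendsto (fun i => ∫ t in (0:ℝ)..(Ti i),
        Metric.infDist (γi i t, γi' i t)
          {p : EuclideanSpace ℝ (Fin n) × EuclideanSpace ℝ (Fin n) |
            -p.2 ∈ clarkeSubdiff f p.1}) atTop (nhds 0)) :
    ∀ᵐ t : ℝ, t ∈ Set.Icc 0 T →
      ∃ d, HasDerivAt γ d t ∧ -d ∈ clarkeSubdiff f (γ t) := by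
  set g : ℝ → EuclideanSpace ℝ (Fin n) := fun s => γ (max 0 (min s T)) with hg
  have hglip : LipschitzWith K g := lip_extend hT.le hγ
  have hae : ∀ᵐ s : ℝ, DifferentiableAt ℝ g s := hglip.ae_differentiableAt
  have h0 : ∀ᵐ s : ℝ, s ≠ (0 : ℝ) := by
    rw [ae_iff]
    have : {s : ℝ | ¬s ≠ 0} = {0} := by ext z; simp
    rw [this]; exact Real.volume_singleton
  have hTn : ∀ᵐ s : ℝ, s ≠ T := by
    rw [ae_iff]
    have : {s : ℝ | ¬s ≠ T} = {T} := by ext z; simp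
    rw [this]; exact Real.volume_singleton
  filter_upwards [hae, h0, hTn] with s hdiff hs0 hsT hmem
  have hIoo : s ∈ Set.Ioo 0 T :=
    ⟨lt_of_le_of_ne hmem.1 (Ne.symm hs0), lt_of_le_of_ne hmem.2 hsT⟩
  have heq : g =ᶠ[nhds s] γ := by
    refine Filter.eventually_of_mem (isOpen_Ioo.mem_nhds hIoo) fun z hz => ?_
    rw [hg]
    simp only
    rw [min_eq_left hz.2.le, max_eq_right hz.1.le]
  have hder : HasDerivAt γ (deriv g s) s :=
    (hdiff.hasDerivAt).congr_of_eventuallyEq heq.symm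
  exact ⟨deriv g s, hder,
    aux_core hf hT hTi hTconv hγi hγ hconv hγi' hdist hIoo hder⟩
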